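/- The breadth of the Lie algebra of strictly upper triangular n×n matrices over ℂ equals (n−1)(n−2)/2. -/

import Mathlib

/-- The matrix unit `E p q`. -/
noncomputable def matE {n : ℕ} (p q : Fin n) : Matrix (Fin n) (Fin n) ℂ :=
  Matrix.single p q 1

attribute [local instance] LieRing.ofAssociativeRing

section Aux

open Matrix Submodule

variable {n : ℕ}

/-- Any matrix supported on pairs satisfying `P` lies in the span of the
corresponding matrix units. -/
lemma mem_span_matE (P : Fin n → Fin n → Prop) (m : Matrix (Fin n) (Fin n) ℂ)
    (h : ∀ i j, m i j ≠ 0 → P i j) :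
    m ∈ Submodule.span ℂ {m : Matrix (Fin n) (Fin n) ℂ | ∃ p q, P p q ∧ m = matE p q} := by
  nth_rewrite 1 [Matrix.matrix_eq_sum_single m]
  apply Submodule.sum_mem; intro i _
  apply Submodule.sum_mem; intro j _
  by_cases hm : m i j = 0
  · simp [hm]
  · have : Matrix.single i j (m i j) = m i j • matE i j := by
      simp [matE, Matrix.smul_single]
    rw [this]
    exact Submodule.smul_mem _ _ (Submodule.subset_span ⟨i, j, h i j hm, rfl⟩)

/-- Conversely, any member of such a span is supported on pairs satisfying `P`. -/
lemma upper_of_mem_span (P : Fin n → Fin n → Prop) (m : Matrix (Fin n) (Fin n) ℂ)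
    (hm : m ∈ Submodule.span ℂ {m : Matrix (Fin n) (Fin n) ℂ | ∃ p q, P p q ∧ m = matE p q}) :
    ∀ i j, ¬ P i j → m i j = 0 := by
  classical
  let U : Submodule ℂ (Matrix (Fin n) (Fin n) ℂ) :=
    { carrier := {m | ∀ i j, ¬ P i j → m i j = 0}
      add_mem' := by intro a b ha hb i j h; simp [Matrix.add_apply, ha i j h, hb i j h]
      zero_mem' := by intro i j h; simp
      smul_mem' := by intro c a ha i j h; simp [Matrix.smul_apply, ha i j h] }
  have hle : Submodule.span ℂ {m : Matrix (Fin n) (Fin n) ℂ | ∃ p q, P p q ∧ m = matE p q} ≤ U := by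
    rw [Submodule.span_le]
    rintro _ ⟨p, q, hpq, rfl⟩ i j hij
    simp only [matE, Matrix.single, Matrix.of_apply]
    split_ifs with hc
    · exact absurd (hc.1 ▸ hc.2 ▸ hpq) hij
    · rfl
  exact hle hm

/-- The regular nilpotent element: ones on the superdiagonal. -/
noncomputable def xsup (n : ℕ) : Matrix (Fin n) (Fin n) ℂ :=
  Matrix.of fun i j => if (i : ℕ) + 1 = (j : ℕ) then 1 else 0

lemma lie_xsup (a b : Fin n) (i j : Fin n) :
    ⁅xsup n, matE a b⁆ i j =
      (if (i : ℕ) + 1 = (a : ℕ) ∧ j = b then (1:ℂ) else 0)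
      - (if i = a ∧ (j : ℕ) = (b : ℕ) + 1 then (1:ℂ) else 0) := by
  simp only [Ring.lie_def, Matrix.sub_apply, Matrix.mul_apply, matE, Matrix.single,
    xsup, Matrix.of_apply]
  congr 1
  · rw [Finset.sum_eq_single a]
    · simp only [ite_and]
      split_ifs <;> simp_all [Fin.ext_iff]
    · intro k _ hk
      simp only [ite_and]
      split_ifs <;> simp_all [Fin.ext_iff, eq_comm]
    · simp
  · rw [Finset.sum_eq_single b]
    · simp only [ite_and]
      split_ifs <;> simp_all [Fin.ext_iff, eq_comm]
    · intro k _ hk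
      simp only [ite_and]
      split_ifs <;> simp_all [Fin.ext_iff, eq_comm]
    · simp

lemma sum_aux : ∀ m : ℕ, ∑ k ∈ Finset.range (m + 2), (k - 1) = (m + 1) * m / 2 := by
  intro m
  induction m with
  | zero => decide
  | succ m ih =>
    rw [Finset.sum_range_succ, ih, show m + 2 - 1 = m + 1 from rfl,
      show (m + 1 + 1) * (m + 1) = (m + 1) * m + (m + 1) * 2 by ring,
      Nat.add_mul_div_right _ _ (by norm_num)]

lemma sum_aux' (n : ℕ) : ∑ k ∈ Finset.range n, (k - 1) = (n - 1) * (n - 2) / 2 := by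
  match n with
  | 0 => simp
  | 1 => simp
  | (m+2) => simpa using sum_aux m

lemma cardS (n : ℕ) :
    Fintype.card {pq : Fin n × Fin n // (pq.1 : ℕ) + 2 ≤ (pq.2 : ℕ)} = (n - 1) * (n - 2) / 2 := by
  have e : {pq : Fin n × Fin n // (pq.1 : ℕ) + 2 ≤ (pq.2 : ℕ)} ≃
      Σ q : Fin n, Fin ((q : ℕ) - 1) :=
    { toFun := fun s => ⟨s.1.2, ⟨s.1.1, by have := s.2; omega⟩⟩
      invFun := fun t => ⟨(⟨t.2, by have := t.2.isLt; have := t.1.isLt; omega⟩, t.1),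
        by have := t.2.isLt; simpa using by omega⟩
      left_inv := fun s => by ext <;> rfl
      right_inv := fun t => by ext <;> rfl }
  rw [Fintype.card_congr e, Fintype.card_sigma]
  simp only [Fintype.card_fin]
  rw [Fin.sum_univ_eq_sum_range (fun q => q - 1) n, sum_aux']

lemma finrank_M (n : ℕ) :
    Module.finrank ℂ (Submodule.span ℂ
      {m : Matrix (Fin n) (Fin n) ℂ | ∃ p q : Fin n, (p : ℕ) + 2 ≤ (q : ℕ) ∧ m = matE p q}) =
      (n - 1) * (n - 2) / 2 := by
  set f : {pq : Fin n × Fin n // (pq.1 : ℕ) + 2 ≤ (pq.2 : ℕ)} → Matrix (Fin n) (Fin n) ℂ :=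
    fun s => matE s.1.1 s.1.2 with hf
  have hset : {m : Matrix (Fin n) (Fin n) ℂ | ∃ p q : Fin n, (p : ℕ) + 2 ≤ (q : ℕ) ∧ m = matE p q}
      = Set.range f := by
    ext m
    constructor
    · rintro ⟨p, q, h, rfl⟩; exact ⟨⟨(p, q), h⟩, rfl⟩
    · rintro ⟨⟨⟨p, q⟩, h⟩, rfl⟩; exact ⟨p, q, h, rfl⟩
  have hli : LinearIndependent ℂ f := by
    have : f = (Matrix.stdBasis ℂ (Fin n) (Fin n)) ∘ (fun s => s.1) := by
      funext s
      obtain ⟨⟨p, q⟩, h⟩ := s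
      simp [hf, Matrix.stdBasis_eq_single, matE]
    rw [this]
    exact (Matrix.stdBasis ℂ (Fin n) (Fin n)).linearIndependent.comp _ Subtype.val_injective
  rw [hset, finrank_span_eq_card hli, cardS]

end Aux

open Matrix Submodule

/-- The breadth of the Lie algebra `L` of strictly upper triangular `n × n` complex
matrices equals `(n−1)(n−2)/2`: some `x ∈ L` realizes this rank for `ad_x : L → L`,
and no `x ∈ L` exceeds it. -/
theorem strictly_upper_triangular_breadth (n : ℕ) :
    let L : Submodule ℂ (Matrix (Fin n) (Fin n) ℂ) :=
      Submodule.span ℂ {m : Matrix (Fin n) (Fin n) ℂ | ∃ p q : Fin n, p < q ∧ m = matE p q}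
    (∃ x ∈ L,
        Module.finrank ℂ ↥(Submodule.map (LieAlgebra.ad ℂ (Matrix (Fin n) (Fin n) ℂ) x) L) =
          (n - 1) * (n - 2) / 2) ∧
      ∀ x ∈ L,
        Module.finrank ℂ ↥(Submodule.map (LieAlgebra.ad ℂ (Matrix (Fin n) (Fin n) ℂ) x) L) ≤
          (n - 1) * (n - 2) / 2 := by
  intro L
  set M : Submodule ℂ (Matrix (Fin n) (Fin n) ℂ) :=
    Submodule.span ℂ
      {m : Matrix (Fin n) (Fin n) ℂ | ∃ p q : Fin n, (p : ℕ) + 2 ≤ (q : ℕ) ∧ m = matE p q}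
    with hM
  -- upper bound: for any x ∈ L, the image of ad x on L lies in M
  have hmap_le : ∀ x ∈ L, Submodule.map (LieAlgebra.ad ℂ (Matrix (Fin n) (Fin n) ℂ) x) L ≤ M := by
    intro x hx
    have hxu : ∀ i j, ¬ (i < j) → x i j = 0 :=
      upper_of_mem_span (fun p q => p < q) x hx
    rintro _ ⟨m, hm, rfl⟩
    have hmu : ∀ i j, ¬ (i < j) → m i j = 0 :=
      upper_of_mem_span (fun p q => p < q) m hm
    rw [LieAlgebra.ad_apply, Ring.lie_def]
    apply mem_span_matE
    intro i j hne
    by_contra hij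
    apply hne
    have h1 : ∀ k, x i k * m k j = 0 := by
      intro k
      by_cases h : i < k
      · have : m k j = 0 := hmu k j (by rw [Fin.lt_def] at h ⊢; omega)
        simp [this]
      · simp [hxu i k h]
    have h2 : ∀ k, m i k * x k j = 0 := by
      intro k
      by_cases h : i < k
      · have : x k j = 0 := hxu k j (by rw [Fin.lt_def] at h ⊢; omega)
        simp [this]
      · simp [hmu i k h]
    simp [Matrix.sub_apply, Matrix.mul_apply, h1, h2]
  have hfinM : Module.finrank ℂ M = (n - 1) * (n - 2) / 2 := finrank_M n
  constructor
  · -- existence: the regular nilpotent xsup works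
    have hxL : xsup n ∈ L := by
      apply mem_span_matE
      intro i j h
      simp only [xsup, Matrix.of_apply] at h
      rw [Fin.lt_def]
      by_contra hc
      rw [if_neg (by omega)] at h
      exact h rfl
    refine ⟨xsup n, hxL, ?_⟩
    -- the image contains every matE p q with p + 2 ≤ q
    have key : ∀ d : ℕ, ∀ p q : Fin n, (p : ℕ) + 2 ≤ (q : ℕ) → n - 1 - (q : ℕ) = d →
        matE p q ∈ Submodule.map (LieAlgebra.ad ℂ (Matrix (Fin n) (Fin n) ℂ) (xsup n)) L := by
      intro d
      induction d with
      | zero =>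
        intro p q hpq hq
        have hqn : (q : ℕ) = n - 1 := by have := q.isLt; omega
        set a : Fin n := ⟨(p : ℕ) + 1, by have := q.isLt; omega⟩ with ha
        have hav : (a : ℕ) = (p : ℕ) + 1 := rfl
        have hcond : ∀ i j : Fin n, ((i : ℕ) + 1 = (a : ℕ) ∧ j = q ↔ p = i ∧ q = j) := by
          intro i j
          rw [hav]
          constructor
          · rintro ⟨h, rfl⟩; exact ⟨Fin.ext (by omega), rfl⟩
          · rintro ⟨rfl, rfl⟩; exact ⟨by omega, rfl⟩
        have haL : matE a q ∈ L :=
          Submodule.subset_span ⟨a, q, by rw [Fin.lt_def, hav]; omega, rfl⟩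
        refine ⟨matE a q, haL, ?_⟩
        rw [LieAlgebra.ad_apply]
        ext i j
        rw [lie_xsup]
        have hj : (j : ℕ) ≠ (q : ℕ) + 1 := by have := j.isLt; omega
        rw [if_neg (fun h : i = a ∧ (j : ℕ) = (q : ℕ) + 1 => hj h.2), sub_zero,
          if_congr (hcond i j) rfl rfl]
        simp [matE, Matrix.single, Matrix.of_apply]
      | succ d ih =>
        intro p q hpq hq
        have hqn : (q : ℕ) + 1 < n := by have := q.isLt; omega
        set a : Fin n := ⟨(p : ℕ) + 1, by have := q.isLt; omega⟩ with ha
        set q' : Fin n := ⟨(q : ℕ) + 1, hqn⟩ with hq'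
        have hav : (a : ℕ) = (p : ℕ) + 1 := rfl
        have hq'v : (q' : ℕ) = (q : ℕ) + 1 := rfl
        have hcond : ∀ i j : Fin n, ((i : ℕ) + 1 = (a : ℕ) ∧ j = q ↔ p = i ∧ q = j) := by
          intro i j
          rw [hav]
          constructor
          · rintro ⟨h, rfl⟩; exact ⟨Fin.ext (by omega), rfl⟩
          · rintro ⟨rfl, rfl⟩; exact ⟨by omega, rfl⟩
        have hcond2 : ∀ i j : Fin n,
            (i = a ∧ (j : ℕ) = (q : ℕ) + 1 ↔ a = i ∧ q' = j) := by
          intro i j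
          constructor
          · rintro ⟨rfl, h⟩; exact ⟨rfl, Fin.ext (by rw [hq'v]; omega)⟩
          · rintro ⟨rfl, rfl⟩; exact ⟨rfl, hq'v⟩
        have haL : matE a q ∈ L :=
          Submodule.subset_span ⟨a, q, by rw [Fin.lt_def, hav]; omega, rfl⟩
        have h1 : matE a q' ∈
            Submodule.map (LieAlgebra.ad ℂ (Matrix (Fin n) (Fin n) ℂ) (xsup n)) L :=
          ih a q' (by rw [hav, hq'v]; omega) (by rw [hq'v]; omega)
        have h2 : ⁅xsup n, matE a q⁆ = matE p q - matE a q' := by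
          ext i j
          rw [lie_xsup, Matrix.sub_apply]
          congr 1
          · rw [if_congr (hcond i j) rfl rfl]
            simp [matE, Matrix.single, Matrix.of_apply]
          · rw [if_congr (hcond2 i j) rfl rfl]
            simp [matE, Matrix.single, Matrix.of_apply]
        have h3 : matE p q =
            (LieAlgebra.ad ℂ (Matrix (Fin n) (Fin n) ℂ) (xsup n)) (matE a q) + matE a q' := by
          rw [LieAlgebra.ad_apply, h2]; abel
        rw [h3]
        exact Submodule.add_mem _ ⟨matE a q, haL, rfl⟩ h1
    have hMle : M ≤ Submodule.map (LieAlgebra.ad ℂ (Matrix (Fin n) (Fin n) ℂ) (xsup n)) L := by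
      rw [hM, Submodule.span_le]
      rintro _ ⟨p, q, hpq, rfl⟩
      exact key (n - 1 - (q : ℕ)) p q hpq rfl
    have : Submodule.map (LieAlgebra.ad ℂ (Matrix (Fin n) (Fin n) ℂ) (xsup n)) L = M :=
      le_antisymm (hmap_le _ hxL) hMle
    rw [this, hfinM]
  · intro x hx
    calc Module.finrank ℂ ↥(Submodule.map (LieAlgebra.ad ℂ (Matrix (Fin n) (Fin n) ℂ) x) L)
        ≤ Module.finrank ℂ M := Submodule.finrank_mono (hmap_le x hx)
      _ = (n - 1) * (n - 2) / 2 := hfinM
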